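/- Let $p, m \in \mathbb{N}$ with $m \le p$, and let $H \sim \mathrm{Hypergeometric}(p, m, m)$ (the size of the intersection of two independent uniformly random $m$-subsets of a $p$-set). There exists a function $\tau: \mathbb{R}_+ \to \mathbb{R}_+$ with $\tau(b) \to 1$ as $b \to 0^+$ such that: for any $0 < b < 1/(16e)$ and $\lambda = b \min\{\frac{1}{m}\log\frac{ep}{m}, \frac{p^2}{m^4}\}$, $\mathbb{E}[\exp(\lambda H^2)] \le \tau(b)$. -/

import Mathlib

open Finset

lemma pow_self_le_factorial_mul_exp (n : ℕ) :
    (n : ℝ) ^ n ≤ (n.factorial : ℝ) * Real.exp 1 ^ n := by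
  have h : ((n : ℝ)) ^ n / (n.factorial : ℝ) ≤ Real.exp n := by
    have h2 := Real.sum_le_exp_of_nonneg (x := (n:ℝ)) (Nat.cast_nonneg n) (n+1)
    refine le_trans ?_ h2
    exact Finset.single_le_sum (f := fun i => (n:ℝ)^i / (i.factorial:ℝ))
      (fun i _ => by positivity) (self_mem_range_succ n)
  have hfac : (0:ℝ) < n.factorial := by exact_mod_cast n.factorial_pos
  have := (div_le_iff₀ hfac).mp h
  calc ((n:ℝ))^n ≤ Real.exp n * n.factorial := this
    _ = (n.factorial : ℝ) * Real.exp 1 ^ n := by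
        rw [← Real.exp_nat_mul]; ring_nf

lemma choose_le_e_pow (m h : ℕ) (hh : 1 ≤ h) :
    (m.choose h : ℝ) ≤ (Real.exp 1 * m / h) ^ h := by
  have h1 : (m.choose h : ℝ) ≤ (m:ℝ)^h / h.factorial := Nat.choose_le_pow_div h m
  have h2 : (h:ℝ)^h ≤ (h.factorial : ℝ) * Real.exp 1 ^ h := pow_self_le_factorial_mul_exp h
  have hhpos : (0:ℝ) < h := by exact_mod_cast hh
  have hfac : (0:ℝ) < h.factorial := by exact_mod_cast h.factorial_pos
  refine h1.trans ?_
  rw [div_pow, mul_pow, div_le_div_iff₀ hfac (by positivity)]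
  calc (m:ℝ)^h * (h:ℝ)^h ≤ (m:ℝ)^h * ((h.factorial:ℝ) * Real.exp 1 ^ h) := by
        exact mul_le_mul_of_nonneg_left h2 (by positivity)
    _ = Real.exp 1 ^ h * (m:ℝ)^h * h.factorial := by ring

lemma descFactorial_mul_pow_le (p m h : ℕ) (hmp : m ≤ p) :
    m.descFactorial h * p ^ h ≤ p.descFactorial h * m ^ h := by
  have ep : p ^ h = ∏ _i ∈ range h, p := by simp
  have em : m ^ h = ∏ _i ∈ range h, m := by simp
  rw [Nat.descFactorial_eq_prod_range, Nat.descFactorial_eq_prod_range, ep, em,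
    ← Finset.prod_mul_distrib, ← Finset.prod_mul_distrib]
  apply Finset.prod_le_prod'
  intro i _
  calc (m - i) * p = m * p - i * p := by rw [Nat.sub_mul]
    _ ≤ p * m - i * m := by
        rw [Nat.mul_comm m p]
        exact Nat.sub_le_sub_left (Nat.mul_le_mul_left i hmp) _
    _ = (p - i) * m := by rw [Nat.sub_mul]

lemma choose_ratio_le (p m h : ℕ) (hmp : m ≤ p) :
    (m.choose h : ℝ) * (p:ℝ) ^ h ≤ (p.choose h : ℝ) * (m:ℝ) ^ h := by
  have key := descFactorial_mul_pow_le p m h hmp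
  have e1 : m.descFactorial h = h.factorial * m.choose h := Nat.descFactorial_eq_factorial_mul_choose m h
  have e2 : p.descFactorial h = h.factorial * p.choose h := Nat.descFactorial_eq_factorial_mul_choose p h
  rw [e1, e2] at key
  have key2 : (h.factorial : ℝ) * ((m.choose h : ℝ) * (p:ℝ)^h) ≤ (h.factorial : ℝ) * ((p.choose h : ℝ) * (m:ℝ)^h) := by
    have := (Nat.cast_le (α := ℝ)).mpr key
    push_cast at this
    nlinarith [this]
  have hfac : (0:ℝ) < h.factorial := by exact_mod_cast h.factorial_pos
  exact le_of_mul_le_mul_left key2 hfac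

lemma key_nat (p m h : ℕ) (hhm : h ≤ m) (hmp : m ≤ p) :
    (p - m).choose (m - h) * p.choose h ≤ m.choose h * p.choose m := by
  have hid := Nat.choose_mul (n := p) hhm
  -- p.choose m * m.choose h = p.choose h * (p-h).choose (m-h)
  have hmono : (p - m).choose (m - h) ≤ (p - h).choose (m - h) :=
    Nat.choose_le_choose _ (Nat.sub_le_sub_left hhm p)
  calc (p - m).choose (m - h) * p.choose h ≤ (p - h).choose (m - h) * p.choose h :=
        Nat.mul_le_mul_right _ hmono
    _ = p.choose h * (p - h).choose (m - h) := Nat.mul_comm _ _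
    _ = p.choose m * m.choose h := hid.symm
    _ = m.choose h * p.choose m := Nat.mul_comm _ _

lemma q_le_pow (p m h : ℕ) (h1 : 1 ≤ h) (hhm : h ≤ m) (hmp : m ≤ p) (hm1 : 1 ≤ m) :
    ((m.choose h * (p - m).choose (m - h) : ℕ) : ℝ) / (p.choose m : ℝ) ≤
      (Real.exp 1 * ((m:ℝ)^2 / (p:ℝ)) / (h:ℝ)) ^ h := by
  have hp1 : 1 ≤ p := le_trans hm1 hmp
  have hPpos : (0:ℝ) < p := by exact_mod_cast hp1
  have hMpos : (0:ℝ) < m := by exact_mod_cast hm1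
  have hHpos : (0:ℝ) < h := by exact_mod_cast h1
  have hcpm : (0:ℝ) < (p.choose m : ℝ) := by exact_mod_cast Nat.choose_pos hmp
  have hcph : (0:ℝ) < (p.choose h : ℝ) := by exact_mod_cast Nat.choose_pos (le_trans hhm hmp)
  -- step 1 : q ≤ C(m,h)^2 / C(p,h)
  have step1 : ((m.choose h * (p - m).choose (m - h) : ℕ) : ℝ) / (p.choose m : ℝ) ≤
      (m.choose h : ℝ)^2 / (p.choose h : ℝ) := by
    rw [div_le_div_iff₀ hcpm hcph]
    have := key_nat p m h hhm hmp
    have hkey : (((p - m).choose (m - h) : ℕ) : ℝ) * (p.choose h : ℝ) ≤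
        (m.choose h : ℝ) * (p.choose m : ℝ) := by exact_mod_cast this
    have hchnn : (0:ℝ) ≤ (m.choose h : ℝ) := by positivity
    push_cast
    nlinarith [hkey, hchnn]
  refine step1.trans ?_
  -- step 2 : C(m,h)^2/C(p,h) ≤ C(m,h) * (m/p)^h
  have hratio : (m.choose h : ℝ) ≤ (p.choose h : ℝ) * ((m:ℝ)/(p:ℝ))^h := by
    have := choose_ratio_le p m h hmp
    rw [div_pow, ← mul_div_assoc, le_div_iff₀ (by positivity)]
    linarith [this]
  have step2 : (m.choose h : ℝ)^2 / (p.choose h : ℝ) ≤ (m.choose h : ℝ) * ((m:ℝ)/(p:ℝ))^h := by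
    rw [div_le_iff₀ hcph]
    have hchnn : (0:ℝ) ≤ (m.choose h : ℝ) := by positivity
    calc (m.choose h : ℝ)^2 = (m.choose h : ℝ) * (m.choose h : ℝ) := sq (m.choose h : ℝ) ▸ by ring
      _ ≤ (m.choose h : ℝ) * ((p.choose h : ℝ) * ((m:ℝ)/(p:ℝ))^h) :=
          mul_le_mul_of_nonneg_left hratio hchnn
      _ = (m.choose h : ℝ) * ((m:ℝ)/(p:ℝ))^h * (p.choose h : ℝ) := by ring
  refine step2.trans ?_
  -- step 3
  have step3 : (m.choose h : ℝ) ≤ (Real.exp 1 * m / h)^h := choose_le_e_pow m h h1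
  calc (m.choose h : ℝ) * ((m:ℝ)/(p:ℝ))^h ≤ (Real.exp 1 * m / h)^h * ((m:ℝ)/(p:ℝ))^h := by
        apply mul_le_mul_of_nonneg_right step3 (by positivity)
    _ = (Real.exp 1 * m / h * ((m:ℝ)/(p:ℝ)))^h := by rw [← mul_pow]
    _ = (Real.exp 1 * ((m:ℝ)^2 / (p:ℝ)) / (h:ℝ)) ^ h := by
        congr 1; field_simp

lemma vandermonde_sum (p m : ℕ) (hmp : m ≤ p) :
    ∑ h ∈ range (m + 1), (m.choose h * (p - m).choose (m - h)) = p.choose m := by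
  have h1 : (m + (p - m)).choose m = ∑ ij ∈ Finset.HasAntidiagonal.antidiagonal m, m.choose ij.1 * (p - m).choose ij.2 :=
    Nat.add_choose_eq m (p - m) m
  rw [Nat.add_sub_cancel' hmp] at h1
  rw [h1, Finset.Nat.sum_antidiagonal_eq_sum_range_succ_mk]

lemma log_le_div_e {x : ℝ} (hx : 0 < x) : Real.log x ≤ x / Real.exp 1 := by
  have h := Real.log_le_sub_one_of_pos (show 0 < x / Real.exp 1 by positivity)
  rw [Real.log_div (ne_of_gt hx) (ne_of_gt (Real.exp_pos 1)), Real.log_exp] at h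
  linarith

lemma claimC {M b : ℝ} (hM : 1 ≤ M) (hb : 0 < b) (hb4 : b ≤ 1/4) (h : ℝ)
    (hh1 : 1 ≤ h) (hhM : h ≤ M) :
    b * h / M * Real.log M - (1/2) * Real.log h ≤ 2 * b / Real.exp 1 := by
  have hMpos : (0:ℝ) < M := lt_of_lt_of_le one_pos hM
  have hlogM : 0 ≤ Real.log M := Real.log_nonneg hM
  have hlogh : 0 ≤ Real.log h := Real.log_nonneg hh1
  rcases le_or_gt (Real.sqrt M) h with hc | hc
  · -- h ≥ √M : log h ≥ (1/2) log M
    have h2 : Real.log M ≤ 2 * Real.log h := by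
      have : Real.log (Real.sqrt M) ≤ Real.log h :=
        Real.log_le_log (Real.sqrt_pos.mpr hMpos) hc
      rw [Real.log_sqrt hMpos.le] at this; linarith
    have h3 : b * h / M * Real.log M ≤ b * Real.log M := by
      have hhM' : h / M ≤ 1 := div_le_one_of_le₀ hhM hMpos.le
      have : b * (h / M) * Real.log M ≤ b * 1 * Real.log M := by
        apply mul_le_mul_of_nonneg_right _ hlogM
        apply mul_le_mul_of_nonneg_left hhM' hb.le
      calc b * h / M * Real.log M = b * (h/M) * Real.log M := by ring
        _ ≤ b * 1 * Real.log M := this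
        _ = b * Real.log M := by ring
    have : b * Real.log M - (1/2) * Real.log h ≤ 0 := by nlinarith
    have hpos : 0 ≤ 2 * b / Real.exp 1 := by positivity
    linarith
  · -- h < √M
    have hsq : (0:ℝ) < Real.sqrt M := Real.sqrt_pos.mpr hMpos
    have hlm : Real.log M ≤ 2 * Real.sqrt M / Real.exp 1 := by
      have h5 := log_le_div_e hsq
      rw [Real.log_sqrt hMpos.le] at h5
      have h7 : 2 * Real.sqrt M / Real.exp 1 = 2 * (Real.sqrt M / Real.exp 1) := by ring
      rw [h7]; linarith
    have hM' : h / M < 1 / Real.sqrt M := by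
      rw [div_lt_div_iff₀ hMpos hsq]
      calc h * Real.sqrt M < Real.sqrt M * Real.sqrt M := by
            exact mul_lt_mul_of_pos_right hc hsq
        _ = M := Real.mul_self_sqrt hMpos.le
        _ = 1 * M := (one_mul M).symm
    have key : h / M * Real.log M ≤ 2 / Real.exp 1 := by
      calc h / M * Real.log M ≤ 1 / Real.sqrt M * Real.log M := by
            apply mul_le_mul_of_nonneg_right hM'.le hlogM
        _ ≤ 1 / Real.sqrt M * (2 * Real.sqrt M / Real.exp 1) := by
            apply mul_le_mul_of_nonneg_left hlm (by positivity)
        _ = 2 / Real.exp 1 := by field_simp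
    have : b * h / M * Real.log M ≤ b * (2 / Real.exp 1) := by
      calc b * h / M * Real.log M = b * (h / M * Real.log M) := by ring
        _ ≤ b * (2 / Real.exp 1) := mul_le_mul_of_nonneg_left key hb.le
    have h6 : b * (2 / Real.exp 1) = 2 * b / Real.exp 1 := by ring
    nlinarith [this, hlogh]

lemma case2_bound {M P b h : ℝ} (hM : 1 ≤ M) (hMP : M ≤ P) (hb : 0 < b) (hb4 : b ≤ 1/4)
    (hh1 : 1 ≤ h) (hhM : h ≤ M) (hmu : (M^2/P)^2 < b * h) :
    Real.log (Real.exp 1 * (M^2/P) / h) + (b * ((1 + Real.log (P/M)) / M)) * h ≤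
      1 + b + 2*b/Real.exp 1 + ((1-b)/2) * Real.log b := by
  have hMpos : (0:ℝ) < M := lt_of_lt_of_le one_pos hM
  have hPpos : (0:ℝ) < P := lt_of_lt_of_le hMpos hMP
  have hhpos : (0:ℝ) < h := lt_of_lt_of_le one_pos hh1
  set r : ℝ := P / M with hr
  have hr1 : 1 ≤ r := (one_le_div hMpos).mpr hMP
  have hrpos : 0 < r := lt_of_lt_of_le one_pos hr1
  have hmur : M^2/P = M/r := by rw [hr]; field_simp
  set s : ℝ := b * h / M with hs
  have hs0 : 0 < s := by positivity
  have hsb : s ≤ b := by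
    rw [hs]; rw [div_le_iff₀ hMpos]
    calc b * h ≤ b * M := mul_le_mul_of_nonneg_left hhM hb.le
      _ = b * M := rfl
  -- expand LHS
  have hlhs : Real.log (Real.exp 1 * (M^2/P) / h) + (b * ((1 + Real.log (P/M)) / M)) * h =
      1 + Real.log M - Real.log r - Real.log h + s + s * Real.log r := by
    rw [hmur]
    rw [Real.log_div (by positivity) (ne_of_gt hhpos), Real.log_mul (ne_of_gt (Real.exp_pos 1))
      (by positivity), Real.log_exp, Real.log_div (ne_of_gt hMpos) (ne_of_gt hrpos)]
    rw [hs, hr]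
    ring
  rw [hlhs]
  set lM := Real.log M
  set lr := Real.log r
  set lh := Real.log h
  set lb := Real.log b
  have hlM : 0 ≤ lM := Real.log_nonneg hM
  have hlh : 0 ≤ lh := Real.log_nonneg hh1
  have hlb : lb ≤ 0 := Real.log_nonpos hb.le (by linarith)
  -- rho and log r lower bound
  have hbhM2 : b * h ≤ M^2 := by nlinarith
  have hrho0 : 0 ≤ lM - (lb + lh)/2 := by
    have : lb + lh = Real.log (b*h) := (Real.log_mul (ne_of_gt hb) (ne_of_gt hhpos)).symm
    rw [this]
    have h1 : Real.log (b*h) ≤ Real.log (M^2) := Real.log_le_log (by positivity) hbhM2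
    rw [Real.log_pow] at h1
    push_cast at h1
    linarith
  have hlr_ge : lM - (lb + lh)/2 ≤ lr := by
    have hM2 : M^2 < (b*h) * r^2 := by
      have : (M/r)^2 < b * h := by rw [← hmur]; exact hmu
      have h2 : (M/r)^2 = M^2/r^2 := by rw [div_pow]
      rw [h2] at this
      calc M^2 = M^2/r^2 * r^2 := by field_simp
        _ < (b*h) * r^2 := by apply mul_lt_mul_of_pos_right this (by positivity)
    have h3 : Real.log (M^2) ≤ Real.log ((b*h) * r^2) :=
      Real.log_le_log (by positivity) hM2.le
    rw [Real.log_mul (by positivity) (by positivity), Real.log_mul (ne_of_gt hb) (ne_of_gt hhpos),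
      Real.log_pow, Real.log_pow] at h3
    push_cast at h3
    linarith
  have hlr0 : 0 ≤ lr := Real.log_nonneg hr1
  -- products
  have P1 : (1 - s) * (lM - (lb + lh)/2) ≤ (1 - s) * lr :=
    mul_le_mul_of_nonneg_left hlr_ge (by linarith)
  have P2 : (1 - s) * lb ≤ (1 - b) * lb := by
    apply mul_le_mul_of_nonpos_right _ hlb
    linarith
  have P3 : s * lM - lh/2 ≤ 2*b/Real.exp 1 := by
    have := claimC hM hb hb4 h hh1 hhM
    rw [hs]
    calc b * h / M * lM - lh/2 = b * h / M * Real.log M - (1/2) * Real.log h := by ring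
      _ ≤ 2 * b / Real.exp 1 := this
  have P4 : 0 ≤ s * lh := mul_nonneg hs0.le hlh
  nlinarith [P1, P2, P3, P4, hsb]

lemma geom_le' {x : ℝ} (h0 : 0 ≤ x) (h1 : x < 1) (n : ℕ) :
    ∑ j ∈ range n, x ^ j ≤ 1/(1-x) := by
  have hne : x ≠ 1 := ne_of_lt h1
  rw [geom_sum_eq hne]
  have heq : (x^n - 1)/(x-1) = (1 - x^n)/(1-x) := by
    rw [← neg_div_neg_eq]; ring_nf
  rw [heq, div_le_div_iff₀ (by linarith) (by linarith)]
  have : (0:ℝ) ≤ x ^ n := pow_nonneg h0 n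
  nlinarith

noncomputable def eps1 (b : ℝ) : ℝ := Real.sqrt (Real.sqrt (16 * Real.exp 1 * b))
noncomputable def C2 : ℝ :=
  Real.exp (1 + 1/(2*Real.exp 1) + (1 + 2/Real.exp 1)/(16*Real.exp 1))
noncomputable def epsf (b : ℝ) : ℝ := max (eps1 b) (C2 * Real.sqrt b)
noncomputable def C1 : ℝ := (Real.exp 1)^4 / Real.sqrt (16*Real.exp 1)
noncomputable def tauF (b : ℝ) : ℝ := Real.exp (C1 * Real.sqrt b) + epsf b / (1 - epsf b)

lemma hQ2 : (2:ℝ) < Real.exp 1 := by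
  have := Real.exp_one_gt_d9; linarith

lemma neg_mul_log_le {b : ℝ} (hb : 0 < b) : -(b * Real.log b) ≤ 1 / Real.exp 1 := by
  have h := log_le_div_e (x := b⁻¹) (by positivity)
  rw [Real.log_inv] at h
  have := mul_le_mul_of_nonneg_left h hb.le
  rw [mul_neg] at this
  calc -(b * Real.log b) ≤ b * (b⁻¹ / Real.exp 1) := this
    _ = 1 / Real.exp 1 := by field_simp

lemma eps2_le {b : ℝ} (hb : 0 < b) (hbB : b ≤ 1/(16*Real.exp 1)) :
    Real.exp (1 + b + 2*b/Real.exp 1 + ((1-b)/2) * Real.log b) ≤ C2 * Real.sqrt b := by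
  have hQ : (0:ℝ) < Real.exp 1 := Real.exp_pos 1
  have hsq : Real.sqrt b = Real.exp ((1/2) * Real.log b) := by
    rw [Real.sqrt_eq_rpow, Real.rpow_def_of_pos hb]; ring_nf
  rw [C2, hsq, ← Real.exp_add, Real.exp_le_exp]
  have h1 : -(b/2 * Real.log b) ≤ 1/(2*Real.exp 1) := by
    have := neg_mul_log_le hb
    calc -(b/2 * Real.log b) = (1/2) * (-(b * Real.log b)) := by ring
      _ ≤ (1/2) * (1/Real.exp 1) := by linarith [neg_mul_log_le hb]
      _ = 1/(2*Real.exp 1) := by ring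
  have h2 : b + 2*b/Real.exp 1 ≤ (1 + 2/Real.exp 1)/(16*Real.exp 1) := by
    have hb2 : b * (1 + 2/Real.exp 1) ≤ (1/(16*Real.exp 1)) * (1 + 2/Real.exp 1) := by
      apply mul_le_mul_of_nonneg_right hbB (by positivity)
    calc b + 2*b/Real.exp 1 = b * (1 + 2/Real.exp 1) := by ring
      _ ≤ (1/(16*Real.exp 1)) * (1 + 2/Real.exp 1) := hb2
      _ = (1 + 2/Real.exp 1)/(16*Real.exp 1) := by ring
  have : ((1-b)/2) * Real.log b = (1/2) * Real.log b + (-(b/2 * Real.log b)) := by ring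
  rw [this]
  linarith

lemma eps1_nonneg (b : ℝ) : 0 ≤ eps1 b := Real.sqrt_nonneg _
lemma epsf_nonneg (b : ℝ) : 0 ≤ epsf b := le_trans (eps1_nonneg b) (le_max_left _ _)

lemma C2_lt_four : C2 < 4 := by
  have hQ := hQ2
  have hQ9 := Real.exp_one_gt_d9
  have hQl := Real.exp_one_lt_d9
  have hexp : (1:ℝ) + 1/(2*Real.exp 1) + (1 + 2/Real.exp 1)/(16*Real.exp 1) ≤ 1.25 := by
    have h1 : 1/(2*Real.exp 1) ≤ (0.185:ℝ) := by
      rw [div_le_iff₀ (by positivity)]; nlinarith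
    have h2 : (1 + 2/Real.exp 1)/(16*Real.exp 1) ≤ (0.05:ℝ) := by
      rw [div_le_iff₀ (by positivity)]
      have : 2/Real.exp 1 ≤ 1 := by rw [div_le_one (by positivity)]; linarith
      nlinarith
    linarith
  have : C2 ≤ Real.exp 1.25 := by rw [C2]; exact Real.exp_le_exp.mpr hexp
  refine lt_of_le_of_lt this ?_
  have h3 : Real.exp (1.25:ℝ) = Real.exp 1 * Real.exp 0.25 := by
    rw [← Real.exp_add]; norm_num
  have h4 : Real.exp (0.25:ℝ) ≤ 1/(1-0.25) := by
    have := Real.add_one_le_exp (-0.25:ℝ)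
    have hpos := Real.exp_pos (0.25:ℝ)
    rw [Real.exp_neg] at this
    rw [le_div_iff₀ (by norm_num : (0:ℝ) < 1 - 0.25)]
    have h5 : (1:ℝ) - 0.25 ≤ (Real.exp 0.25)⁻¹ := by linarith
    calc Real.exp 0.25 * (1 - 0.25) ≤ Real.exp 0.25 * (Real.exp 0.25)⁻¹ := by
          apply mul_le_mul_of_nonneg_left h5 hpos.le
      _ = 1 := by field_simp
  rw [h3]
  nlinarith [Real.exp_pos (0.25:ℝ)]

lemma epsf_lt_one {b : ℝ} (hb : 0 < b) (hbB : b < 1/(16*Real.exp 1)) : epsf b < 1 := by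
  have hQ := hQ2
  have h16 : 16 * Real.exp 1 * b < 1 := by
    rw [lt_div_iff₀ (by positivity)] at hbB; linarith [hbB]
  have h1 : eps1 b < 1 := by
    rw [eps1]
    have : Real.sqrt (16 * Real.exp 1 * b) < 1 := by
      rw [show (1:ℝ) = Real.sqrt 1 by simp]
      exact Real.sqrt_lt_sqrt (by positivity) (by simpa using h16)
    calc Real.sqrt (Real.sqrt (16 * Real.exp 1 * b)) < Real.sqrt 1 := by
          exact Real.sqrt_lt_sqrt (Real.sqrt_nonneg _) (by simpa using this)
      _ = 1 := by simp
  have h2 : C2 * Real.sqrt b < 1 := by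
    have hsb : Real.sqrt b < 1/6 := by
      have hblt : b < 1/36 := by
        have : (1:ℝ)/(16*Real.exp 1) < 1/36 := by
          rw [div_lt_div_iff₀ (by positivity) (by norm_num)]
          nlinarith [Real.exp_one_gt_d9]
        linarith
      calc Real.sqrt b < Real.sqrt (1/36) := Real.sqrt_lt_sqrt hb.le hblt
        _ = 1/6 := by
          rw [show (1:ℝ)/36 = (1/6)^2 by norm_num, Real.sqrt_sq (by norm_num)]
    have := C2_lt_four
    have hC2pos : 0 < C2 := Real.exp_pos _
    nlinarith [Real.sqrt_nonneg b]
  exact max_lt h1 h2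

lemma tauF_tendsto : Filter.Tendsto tauF (nhdsWithin 0 (Set.Ioi 0)) (nhds 1) := by
  have hcont : ContinuousAt tauF 0 := by
    have hsqrt : Continuous fun b : ℝ => Real.sqrt b := Real.continuous_sqrt
    have heps : Continuous epsf := by
      apply Continuous.max
      · exact hsqrt.comp (hsqrt.comp (by continuity))
      · exact continuous_const.mul hsqrt
    apply ContinuousAt.add
    · exact (Real.continuous_exp.comp (continuous_const.mul hsqrt)).continuousAt
    · apply ContinuousAt.div heps.continuousAt
        ((continuous_const.sub heps).continuousAt)
      have : epsf 0 = 0 := by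
        simp [epsf, eps1, Real.sqrt_zero]
      show (1:ℝ) - epsf 0 ≠ 0
      rw [this]; norm_num
  have hval : tauF 0 = 1 := by
    have : epsf 0 = 0 := by simp [epsf, eps1, Real.sqrt_zero]
    simp [tauF, this, Real.sqrt_zero]
  have := hcont.continuousWithinAt (s := Set.Ioi 0)
  rw [ContinuousWithinAt, hval] at this
  exact this

set_option maxHeartbeats 2000000 in
/-- Uniform exponential moment bound for the hypergeometric distribution
`H ~ Hypergeometric(p,m,m)`: there is `τ` with `τ(b) → 1` as `b → 0⁺` such
that `E[exp(λ H²)] ≤ τ(b)` whenever `0 < b < 1/(16e)` and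
`λ = b min{(1/m) log(ep/m), p²/m⁴}`. -/
theorem stmt_11 :
    ∃ τ : ℝ → ℝ,
      Filter.Tendsto τ (nhdsWithin 0 (Set.Ioi 0)) (nhds 1) ∧
      ∀ (p m : ℕ), 1 ≤ m → m ≤ p →
        ∀ b : ℝ, 0 < b → b < 1 / (16 * Real.exp 1) →
          ∀ lam : ℝ,
            lam = b * min ((1 / (m : ℝ)) * Real.log (Real.exp 1 * p / m))
              ((p : ℝ) ^ 2 / (m : ℝ) ^ 4) →
            ∑ h ∈ Finset.range (m + 1),
                ((m.choose h * (p - m).choose (m - h) : ℕ) : ℝ) /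
                    (p.choose m : ℝ) * Real.exp (lam * (h : ℝ) ^ 2)
              ≤ τ b := by
  classical
  refine ⟨tauF, tauF_tendsto, ?_⟩
  intro p m hm1 hmp b hb hbB lam hlam
  have hQpos : (0:ℝ) < Real.exp 1 := Real.exp_pos 1
  have hQgt2 : (2:ℝ) < Real.exp 1 := hQ2
  have hM1 : (1:ℝ) ≤ (m:ℝ) := by exact_mod_cast hm1
  have hMP : (m:ℝ) ≤ (p:ℝ) := by exact_mod_cast hmp
  have hMpos : (0:ℝ) < (m:ℝ) := lt_of_lt_of_le one_pos hM1
  have hPpos : (0:ℝ) < (p:ℝ) := lt_of_lt_of_le hMpos hMP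
  set μ : ℝ := (m:ℝ)^2/(p:ℝ) with hmudef
  have hmupos : 0 < μ := by positivity
  have hb4 : b ≤ 1/4 := by
    have : 1/(16*Real.exp 1) ≤ 1/4 := by
      rw [div_le_div_iff₀ (by positivity) (by norm_num)]; nlinarith
    linarith
  have hrpos : 0 < (p:ℝ)/(m:ℝ) := by positivity
  have hr1 : 1 ≤ (p:ℝ)/(m:ℝ) := (one_le_div hMpos).mpr hMP
  have hlogQPM : Real.log (Real.exp 1 * p / m) = 1 + Real.log ((p:ℝ)/(m:ℝ)) := by
    rw [mul_div_assoc, Real.log_mul (ne_of_gt hQpos) (ne_of_gt hrpos), Real.log_exp]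
  have hlam1 : lam ≤ b * ((1 + Real.log ((p:ℝ)/(m:ℝ)))/(m:ℝ)) := by
    rw [hlam]
    have hmin := min_le_left ((1/(m:ℝ)) * Real.log (Real.exp 1 * p / m)) ((p:ℝ)^2/(m:ℝ)^4)
    calc b * min ((1/(m:ℝ)) * Real.log (Real.exp 1 * p / m)) ((p:ℝ)^2/(m:ℝ)^4)
        ≤ b * ((1/(m:ℝ)) * Real.log (Real.exp 1 * p / m)) :=
          mul_le_mul_of_nonneg_left hmin hb.le
      _ = b * ((1 + Real.log ((p:ℝ)/(m:ℝ)))/(m:ℝ)) := by rw [hlogQPM]; ring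
  have hlam2 : lam * μ^2 ≤ b := by
    have hmin := min_le_right ((1/(m:ℝ)) * Real.log (Real.exp 1 * p / m)) ((p:ℝ)^2/(m:ℝ)^4)
    have h1 : lam ≤ b * ((p:ℝ)^2/(m:ℝ)^4) := by
      rw [hlam]; exact mul_le_mul_of_nonneg_left hmin hb.le
    have hmu2 : μ^2 = (m:ℝ)^4/(p:ℝ)^2 := by
      rw [hmudef, div_pow]; ring_nf
    calc lam * μ^2 ≤ (b * ((p:ℝ)^2/(m:ℝ)^4)) * μ^2 := by
          apply mul_le_mul_of_nonneg_right h1 (by positivity)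
      _ = b := by rw [hmu2]; field_simp
  have hlampos : 0 < lam := by
    rw [hlam]; apply mul_pos hb; apply lt_min
    · apply mul_pos (by positivity)
      rw [hlogQPM]; have := Real.log_nonneg hr1; linarith
    · positivity
  have heps1pos : 0 < eps1 b := by
    rw [eps1]
    exact Real.sqrt_pos.mpr (Real.sqrt_pos.mpr (by positivity))
  set K : ℝ := (Real.exp 1)^2 / eps1 b with hK
  have hKpos : 0 < K := by positivity
  have hepslt1 : epsf b < 1 := epsf_lt_one hb hbB
  have heps0 : 0 ≤ epsf b := epsf_nonneg b
  have hcpm : (0:ℝ) < (p.choose m : ℝ) := by exact_mod_cast Nat.choose_pos hmp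
  -- total mass
  have hsum_all : ∑ h ∈ Finset.range (m+1),
      ((m.choose h * (p-m).choose (m-h) : ℕ):ℝ) / (p.choose m : ℝ) = 1 := by
    rw [← Finset.sum_div]
    have hnum : ∑ h ∈ Finset.range (m+1), ((m.choose h * (p-m).choose (m-h) : ℕ):ℝ)
        = (p.choose m : ℝ) := by
      rw [← Nat.cast_sum]
      exact_mod_cast congrArg (fun n : ℕ => (n:ℝ)) (vandermonde_sum p m hmp)
    rw [hnum, div_self (ne_of_gt hcpm)]
  -- split the sum
  rw [← Finset.sum_filter_add_sum_filter_not (Finset.range (m+1))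
    (fun h : ℕ => (h:ℝ) ≤ K * μ)]
  have hA : ∑ h ∈ (Finset.range (m+1)).filter (fun h : ℕ => (h:ℝ) ≤ K * μ),
      ((m.choose h * (p-m).choose (m-h) : ℕ):ℝ) / (p.choose m : ℝ) * Real.exp (lam * (h:ℝ)^2)
      ≤ Real.exp (C1 * Real.sqrt b) := by
    have hK2b : K^2 * b = C1 * Real.sqrt b := by
      have he1sq : (eps1 b)^2 = Real.sqrt (16*Real.exp 1*b) := Real.sq_sqrt (Real.sqrt_nonneg _)
      have hsm : Real.sqrt (16*Real.exp 1*b) = Real.sqrt (16*Real.exp 1) * Real.sqrt b :=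
        Real.sqrt_mul (by positivity) b
      have hbsq : Real.sqrt b * Real.sqrt b = b := Real.mul_self_sqrt hb.le
      have h16' : (0:ℝ) < Real.sqrt (16*Real.exp 1) := Real.sqrt_pos.mpr (by positivity)
      have hsb : (0:ℝ) < Real.sqrt b := Real.sqrt_pos.mpr hb
      have hQ4 : ((Real.exp 1)^2)^2 = (Real.exp 1)^4 := by ring
      have hbb : b / (Real.sqrt (16*Real.exp 1) * Real.sqrt b) = Real.sqrt b / Real.sqrt (16*Real.exp 1) := by
        rw [div_eq_div_iff (by positivity) (by positivity)]
        linear_combination (-Real.sqrt (16*Real.exp 1)) * hbsq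
      calc K^2*b = (Real.exp 1)^4/(Real.sqrt (16*Real.exp 1) * Real.sqrt b)*b := by
            rw [hK, div_pow, he1sq, hsm, hQ4]
        _ = (Real.exp 1)^4 * (b/(Real.sqrt (16*Real.exp 1) * Real.sqrt b)) := by ring
        _ = (Real.exp 1)^4 * (Real.sqrt b/Real.sqrt (16*Real.exp 1)) := by rw [hbb]
        _ = C1 * Real.sqrt b := by rw [C1]; ring
    have hterm : ∀ h : ℕ, h ∈ (Finset.range (m+1)).filter (fun h : ℕ => (h:ℝ) ≤ K * μ) →
        ((m.choose h * (p-m).choose (m-h) : ℕ):ℝ) / (p.choose m : ℝ) * Real.exp (lam * (h:ℝ)^2)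
        ≤ ((m.choose h * (p-m).choose (m-h) : ℕ):ℝ) / (p.choose m : ℝ) * Real.exp (C1 * Real.sqrt b) := by
      intro h hh
      rw [Finset.mem_filter] at hh
      obtain ⟨hmem, hcond⟩ := hh
      apply mul_le_mul_of_nonneg_left _ (by positivity)
      rw [Real.exp_le_exp]
      have hh2 : (h:ℝ)^2 ≤ (K*μ)^2 := by
        apply pow_le_pow_left₀ (Nat.cast_nonneg h) hcond
      calc lam * (h:ℝ)^2 ≤ lam * (K*μ)^2 := mul_le_mul_of_nonneg_left hh2 hlampos.le
        _ = K^2 * (lam * μ^2) := by ring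
        _ ≤ K^2 * b := mul_le_mul_of_nonneg_left hlam2 (by positivity)
        _ = C1 * Real.sqrt b := hK2b
    calc ∑ h ∈ (Finset.range (m+1)).filter (fun h : ℕ => (h:ℝ) ≤ K * μ),
        ((m.choose h * (p-m).choose (m-h) : ℕ):ℝ) / (p.choose m : ℝ) * Real.exp (lam * (h:ℝ)^2)
        ≤ ∑ h ∈ (Finset.range (m+1)).filter (fun h : ℕ => (h:ℝ) ≤ K * μ),
          ((m.choose h * (p-m).choose (m-h) : ℕ):ℝ) / (p.choose m : ℝ) * Real.exp (C1 * Real.sqrt b) :=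
          Finset.sum_le_sum hterm
      _ = (∑ h ∈ (Finset.range (m+1)).filter (fun h : ℕ => (h:ℝ) ≤ K * μ),
          ((m.choose h * (p-m).choose (m-h) : ℕ):ℝ) / (p.choose m : ℝ)) * Real.exp (C1 * Real.sqrt b) := by
          rw [← Finset.sum_mul]
      _ ≤ 1 * Real.exp (C1 * Real.sqrt b) := by
          apply mul_le_mul_of_nonneg_right _ (Real.exp_pos _).le
          rw [← hsum_all]
          apply Finset.sum_le_sum_of_subset_of_nonneg (Finset.filter_subset _ _)
          intro i _ _; positivity
      _ = Real.exp (C1 * Real.sqrt b) := one_mul _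
  have hB : ∑ h ∈ (Finset.range (m+1)).filter (fun h : ℕ => ¬ ((h:ℝ) ≤ K * μ)),
      ((m.choose h * (p-m).choose (m-h) : ℕ):ℝ) / (p.choose m : ℝ) * Real.exp (lam * (h:ℝ)^2)
      ≤ epsf b / (1 - epsf b) := by
    have hterm : ∀ h : ℕ, h ∈ (Finset.range (m+1)).filter (fun h : ℕ => ¬ ((h:ℝ) ≤ K * μ)) →
        ((m.choose h * (p-m).choose (m-h) : ℕ):ℝ) / (p.choose m : ℝ) * Real.exp (lam * (h:ℝ)^2)
        ≤ epsf b ^ h := by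
      intro h hh
      rw [Finset.mem_filter] at hh
      obtain ⟨hmem, hcond⟩ := hh
      push_neg at hcond
      have hhm : h ≤ m := Nat.lt_succ_iff.mp (Finset.mem_range.mp hmem)
      have hh1 : 1 ≤ h := by
        rcases Nat.eq_zero_or_pos h with h0 | h1
        · exfalso; rw [h0] at hcond; push_cast at hcond
          nlinarith [mul_pos hKpos hmupos]
        · exact h1
      have hh1R : (1:ℝ) ≤ (h:ℝ) := by exact_mod_cast hh1
      have hhmR : (h:ℝ) ≤ (m:ℝ) := by exact_mod_cast hhm
      have hhpos : (0:ℝ) < (h:ℝ) := lt_of_lt_of_le one_pos hh1R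
      have hq := q_le_pow p m h hh1 hhm hmp hm1
      have hstep : ((m.choose h * (p-m).choose (m-h) : ℕ):ℝ) / (p.choose m : ℝ) * Real.exp (lam*(h:ℝ)^2)
          ≤ (Real.exp 1 * μ / (h:ℝ))^h * Real.exp (lam*(h:ℝ)^2) :=
        mul_le_mul_of_nonneg_right hq (Real.exp_pos _).le
      refine hstep.trans ?_
      have hbase_pos : 0 < Real.exp 1 * μ / (h:ℝ) := by positivity
      rcases le_or_gt (b * (h:ℝ)) (μ^2) with hcase | hcase
      · -- case (i): small h, use mu-branch of lambda
        have hlh : lam * (h:ℝ)^2 ≤ (h:ℝ) := by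
          have h1 : lam * (h:ℝ)^2 * μ^2 ≤ (h:ℝ) * μ^2 := by
            nlinarith [mul_le_mul_of_nonneg_right hlam2 (sq_nonneg (h:ℝ)),
              mul_le_mul_of_nonneg_right hcase hhpos.le]
          exact le_of_mul_le_mul_right h1 (by positivity)
        have hexp : Real.exp (lam*(h:ℝ)^2) ≤ Real.exp 1 ^ h := by
          have he : Real.exp 1 ^ h = Real.exp (h:ℝ) := by
            rw [← Real.exp_nat_mul, mul_one]
          rw [he, Real.exp_le_exp]; exact hlh
        calc (Real.exp 1 * μ / (h:ℝ))^h * Real.exp (lam*(h:ℝ)^2)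
            ≤ (Real.exp 1 * μ / (h:ℝ))^h * Real.exp 1 ^ h := by
              apply mul_le_mul_of_nonneg_left hexp (by positivity)
          _ = (Real.exp 1 * μ / (h:ℝ) * Real.exp 1)^h := by rw [← mul_pow]
          _ ≤ eps1 b ^ h := by
              apply pow_le_pow_left₀ (by positivity)
              have hmuh : μ / (h:ℝ) ≤ 1/K := by
                rw [div_le_div_iff₀ hhpos hKpos]
                nlinarith [hcond]
              have hrw : Real.exp 1 * μ / (h:ℝ) * Real.exp 1 = (Real.exp 1)^2 * (μ/(h:ℝ)) := by
                ring
              rw [hrw]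
              calc (Real.exp 1)^2 * (μ/(h:ℝ)) ≤ (Real.exp 1)^2 * (1/K) := by
                    apply mul_le_mul_of_nonneg_left hmuh (by positivity)
                _ = eps1 b := by rw [hK]; field_simp
          _ ≤ epsf b ^ h := pow_le_pow_left₀ (eps1_nonneg b) (le_max_left _ _) h
      · -- case (ii): use log-branch of lambda
        have hkey := case2_bound hM1 hMP hb hb4 hh1R hhmR (by rw [← hmudef]; nlinarith [hcase])
        have hhR0 : (0:ℝ) ≤ (h:ℝ) := hhpos.le
        have hlamB : lam*(h:ℝ)^2 ≤ (b * ((1 + Real.log ((p:ℝ)/(m:ℝ)))/(m:ℝ))) * (h:ℝ)^2 :=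
          mul_le_mul_of_nonneg_right hlam1 (by positivity)
        have hsum_le : (h:ℝ) * Real.log (Real.exp 1*μ/(h:ℝ)) + lam*(h:ℝ)^2 ≤
            (h:ℝ) * (1 + b + 2*b/Real.exp 1 + ((1-b)/2) * Real.log b) := by
          have h2 := mul_le_mul_of_nonneg_left hkey hhR0
          rw [← hmudef] at h2
          nlinarith [hlamB, h2]
        have hpow_eq : Real.exp ((h:ℝ) * Real.log (Real.exp 1*μ/(h:ℝ))) = (Real.exp 1*μ/(h:ℝ))^h := by
          rw [Real.exp_nat_mul, Real.exp_log hbase_pos]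
        calc (Real.exp 1*μ/(h:ℝ))^h * Real.exp (lam*(h:ℝ)^2)
            = Real.exp ((h:ℝ)*Real.log (Real.exp 1*μ/(h:ℝ)) + lam*(h:ℝ)^2) := by
              rw [Real.exp_add, hpow_eq]
          _ ≤ Real.exp ((h:ℝ) * (1 + b + 2*b/Real.exp 1 + ((1-b)/2) * Real.log b)) :=
              Real.exp_le_exp.mpr hsum_le
          _ = Real.exp (1 + b + 2*b/Real.exp 1 + ((1-b)/2) * Real.log b) ^ h :=
              Real.exp_nat_mul _ h
          _ ≤ epsf b ^ h := by
              apply pow_le_pow_left₀ (Real.exp_pos _).le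
              exact le_trans (eps2_le hb hbB.le) (le_max_right _ _)
    have hsub : (Finset.range (m+1)).filter (fun h : ℕ => ¬ ((h:ℝ) ≤ K * μ)) ⊆
        Finset.Ico 1 (m+1) := by
      intro h hh
      rw [Finset.mem_filter] at hh
      obtain ⟨hmem, hcond⟩ := hh
      push_neg at hcond
      rw [Finset.mem_Ico]
      refine ⟨?_, Finset.mem_range.mp hmem⟩
      rcases Nat.eq_zero_or_pos h with h0 | h1
      · exfalso; rw [h0] at hcond; push_cast at hcond
        nlinarith [mul_pos hKpos hmupos]
      · exact h1
    calc ∑ h ∈ (Finset.range (m+1)).filter (fun h : ℕ => ¬ ((h:ℝ) ≤ K * μ)),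
        ((m.choose h * (p-m).choose (m-h) : ℕ):ℝ) / (p.choose m : ℝ) * Real.exp (lam * (h:ℝ)^2)
        ≤ ∑ h ∈ (Finset.range (m+1)).filter (fun h : ℕ => ¬ ((h:ℝ) ≤ K * μ)), epsf b ^ h :=
          Finset.sum_le_sum hterm
      _ ≤ ∑ h ∈ Finset.Ico 1 (m+1), epsf b ^ h :=
          Finset.sum_le_sum_of_subset_of_nonneg hsub (fun i _ _ => pow_nonneg heps0 i)
      _ = ∑ j ∈ Finset.range m, epsf b ^ (1+j) := by
          rw [Finset.sum_Ico_eq_sum_range]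
          norm_num
      _ = epsf b * ∑ j ∈ Finset.range m, epsf b ^ j := by
          rw [Finset.mul_sum]
          apply Finset.sum_congr rfl
          intro j _
          rw [pow_add, pow_one]
      _ ≤ epsf b * (1/(1-epsf b)) := by
          apply mul_le_mul_of_nonneg_left (geom_le' heps0 hepslt1 m) heps0
      _ = epsf b/(1-epsf b) := by ring
  calc _ ≤ Real.exp (C1 * Real.sqrt b) + epsf b / (1 - epsf b) := add_le_add hA hB
    _ = tauF b := rfl
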